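/- (Proposition 5, global attraction) Assume r > m and β > cIS, and set S1 = (r − m)/cSS, A = (m + γ + μ)/(β − cIS), B = (a·r + γ)/(cSI + β). If S1 > A and S1 < B, then the unique interior equilibrium (S₊, I₊) of the reduced system attracts every positive solution: every solution with S(0) > 0 and I(0) > 0 satisfies (S(t), I(t)) → (S₊, I₊) as t → ∞. -/

import Mathlib

set_option maxHeartbeats 1000000

open Filter Topology Set

/-- Exponential representation of solutions of linear scalar ODEs. -/
lemma exp_rep {g f : ℝ → ℝ} (hg : Continuous g)
    (hf : ∀ t, 0 ≤ t → HasDerivAt f (g t * f t) t) :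
    ∀ t, 0 ≤ t → f t = f 0 * Real.exp (∫ s in (0:ℝ)..t, g s) := by
  intro t ht
  set G : ℝ → ℝ := fun u => ∫ s in (0:ℝ)..u, g s with hGdef
  have hG' : ∀ u : ℝ, HasDerivAt G (g u) u := fun u =>
    (hg.integral_hasStrictDerivAt 0 u).hasDerivAt
  have key : ∀ u ∈ Ico (0:ℝ) t, HasDerivWithinAt (fun s => f s * Real.exp (-G s)) 0 (Ici u) u := by
    intro u hu
    have h1 : HasDerivAt (fun s => f s * Real.exp (-G s))
        (g u * f u * Real.exp (-G u) + f u * (Real.exp (-G u) * -g u)) u :=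
      (hf u hu.1).mul ((hG' u).neg.exp)
    have : g u * f u * Real.exp (-G u) + f u * (Real.exp (-G u) * -g u) = 0 := by ring
    rw [this] at h1
    exact h1.hasDerivWithinAt
  have hcont : ContinuousOn (fun s => f s * Real.exp (-G s)) (Icc 0 t) := by
    intro u hu
    exact (((hf u hu.1).continuousAt.mul
      (((hG' u).neg.exp).continuousAt)).continuousWithinAt)
  have := constant_of_has_deriv_right_zero hcont key t (by simp [ht])
  have hG0 : G 0 = 0 := by simp [hGdef]
  rw [hG0] at this
  simp only [neg_zero, Real.exp_zero, mul_one] at this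
  calc f t = f t * Real.exp (-G t) * Real.exp (G t) := by
        rw [mul_assoc, ← Real.exp_add]; simp
    _ = f 0 * Real.exp (G t) := by rw [this]


lemma monoOn_of_deriv {f v : ℝ → ℝ} {t0 : ℝ}
    (hf : ∀ t, t0 ≤ t → HasDerivAt f (v t) t) (hv : ∀ t, t0 ≤ t → 0 ≤ v t) :
    MonotoneOn f (Ici t0) := by
  apply monotoneOn_of_deriv_nonneg (convex_Ici t0)
    (fun t ht => (hf t ht).continuousAt.continuousWithinAt)
  · intro t ht
    rw [interior_Ici] at ht
    exact (hf t ht.le).differentiableAt.differentiableWithinAt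
  · intro t ht
    rw [interior_Ici] at ht
    rw [(hf t ht.le).deriv]
    exact hv t ht.le

lemma antiOn_of_deriv {f v : ℝ → ℝ} {t0 : ℝ}
    (hf : ∀ t, t0 ≤ t → HasDerivAt f (v t) t) (hv : ∀ t, t0 ≤ t → v t ≤ 0) :
    AntitoneOn f (Ici t0) := by
  apply antitoneOn_of_deriv_nonpos (convex_Ici t0)
    (fun t ht => (hf t ht).continuousAt.continuousWithinAt)
  · intro t ht
    rw [interior_Ici] at ht
    exact (hf t ht.le).differentiableAt.differentiableWithinAt
  · intro t ht
    rw [interior_Ici] at ht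
    rw [(hf t ht.le).deriv]
    exact hv t ht.le

lemma antiOn_of_deriv' {f v : ℝ → ℝ} {s t1 : ℝ}
    (hf : ∀ t, s ≤ t → HasDerivAt f (v t) t) (hst : s ≤ t1)
    (hv : ∀ t, s < t → t < t1 → v t ≤ 0) :
    AntitoneOn f (Icc s t1) := by
  apply antitoneOn_of_deriv_nonpos (convex_Icc s t1)
    (fun t ht => (hf t ht.1).continuousAt.continuousWithinAt)
  · intro t ht
    rw [interior_Icc] at ht
    exact (hf t ht.1.le).differentiableAt.differentiableWithinAt
  · intro t ht
    rw [interior_Icc] at ht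
    rw [(hf t ht.1.le).deriv]
    exact hv t ht.1 ht.2

/-- Invariance of `{f ≤ c}` under a vector field pointing inwards. -/
lemma stay_le {f v : ℝ → ℝ} {t0 c : ℝ}
    (hf : ∀ t, t0 ≤ t → HasDerivAt f (v t) t)
    (hv : ∀ t, t0 ≤ t → c ≤ f t → v t ≤ 0) (h0 : f t0 ≤ c) :
    ∀ t, t0 ≤ t → f t ≤ c := by
  intro t1 ht1
  by_contra hgt
  push_neg at hgt
  set E : Set ℝ := {t | t ∈ Icc t0 t1 ∧ f t ≤ c} with hE
  have hne : E.Nonempty := ⟨t0, ⟨le_refl _, ht1⟩, h0⟩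
  have hbdd : BddAbove E := ⟨t1, fun x hx => hx.1.2⟩
  have hEclosed : IsClosed E := by
    have hcont : ContinuousOn f (Icc t0 t1) := fun u hu =>
      (hf u hu.1).continuousAt.continuousWithinAt
    have h2 : E = Icc t0 t1 ∩ f ⁻¹' (Iic c) := by
      ext x
      simp only [hE, mem_setOf_eq, mem_inter_iff, mem_preimage, mem_Iic]
    rw [h2]
    exact hcont.preimage_isClosed_of_isClosed isClosed_Icc isClosed_Iic
  set u := sSup E with hu
  have huE : u ∈ E := hEclosed.csSup_mem hne hbdd
  have hut1 : u ≤ t1 := huE.1.2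
  have hu0 : t0 ≤ u := huE.1.1
  have hunt : u ≠ t1 := by
    intro h; rw [h] at huE; exact absurd huE.2 (not_le.mpr hgt)
  have hult : u < t1 := lt_of_le_of_ne hut1 hunt
  -- on (u, t1], f t > c
  have hmid : ∀ t, u < t → t ≤ t1 → c < f t := by
    intro t h1 h2
    by_contra hc
    push_neg at hc
    have : t ∈ E := ⟨⟨le_trans hu0 h1.le, h2⟩, hc⟩
    exact absurd (le_csSup hbdd this) (not_le.mpr h1)
  have hanti : AntitoneOn f (Icc u t1) := by
    apply antiOn_of_deriv' (fun t ht => hf t (le_trans hu0 ht)) hult.le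
    intro t h1 h2
    exact hv t (le_trans hu0 h1.le) (hmid t h1 h2.le).le
  have hle : f t1 ≤ f u := hanti ⟨le_refl u, hult.le⟩ ⟨hult.le, le_refl t1⟩ hult.le
  linarith [huE.2]


/-- Orthant invariance for planar linear nonautonomous Metzler systems. -/
lemma metzler {P Q a11 a12 a21 a22 : ℝ → ℝ} {t0 L : ℝ} (hL : 0 < L)
    (hP : ∀ t, t0 ≤ t → HasDerivAt P (a11 t * P t + a12 t * Q t) t)
    (hQ : ∀ t, t0 ≤ t → HasDerivAt Q (a21 t * P t + a22 t * Q t) t)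
    (hb : ∀ t, t0 ≤ t → |a11 t| ≤ L ∧ |a12 t| ≤ L ∧ |a21 t| ≤ L ∧ |a22 t| ≤ L)
    (hoff : ∀ t, t0 ≤ t → 0 ≤ a12 t ∧ 0 ≤ a21 t)
    (hP0 : 0 ≤ P t0) (hQ0 : 0 ≤ Q t0) :
    ∀ t, t0 ≤ t → 0 ≤ P t ∧ 0 ≤ Q t := by
  have main : ∀ η, 0 < η → ∀ t, t0 ≤ t →
      ¬(P t ≤ -(η * Real.exp (3*L*(t - t0))) ∨ Q t ≤ -(η * Real.exp (3*L*(t - t0)))) := by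
    intro η hη
    by_contra hcon
    push_neg at hcon
    obtain ⟨tb, htb, hbad⟩ := hcon
    set c : ℝ → ℝ := fun t => η * Real.exp (3*L*(t - t0)) with hc
    have hcpos : ∀ t, 0 < c t := fun t => mul_pos hη (Real.exp_pos _)
    have hcderiv : ∀ t, HasDerivAt c (3*L*c t) t := by
      intro t
      have h1 : HasDerivAt (fun t => 3*L*(t - t0)) (3*L) t := by
        simpa using ((hasDerivAt_id t).sub_const t0).const_mul (3*L)
      have h2 : HasDerivAt (fun t => η * Real.exp (3*L*(t - t0)))
          (η * (Real.exp (3*L*(t - t0)) * (3*L))) t := (h1.exp).const_mul η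
      convert h2 using 1
      simp [hc]; ring
    set E : Set ℝ := {t | t0 ≤ t ∧ (P t + c t ≤ 0 ∨ Q t + c t ≤ 0)} with hE
    have htbE : tb ∈ E := by
      refine ⟨htb, ?_⟩
      have hctb : c tb = η * Real.exp (3*L*(tb - t0)) := rfl
      rcases hbad with h | h
      · left; linarith
      · right; linarith
    have hne : E.Nonempty := ⟨tb, htbE⟩
    have hbdd : BddBelow E := ⟨t0, fun x hx => hx.1⟩
    have hcl : IsClosed E := by
      have hcP : ContinuousOn (fun t => P t + c t) (Ici t0) := fun u hu =>
        ((hP u hu).continuousAt.add (hcderiv u).continuousAt).continuousWithinAt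
      have hcQ : ContinuousOn (fun t => Q t + c t) (Ici t0) := fun u hu =>
        ((hQ u hu).continuousAt.add (hcderiv u).continuousAt).continuousWithinAt
      have h2 : E = (Ici t0 ∩ (fun t => P t + c t) ⁻¹' Iic 0) ∪
          (Ici t0 ∩ (fun t => Q t + c t) ⁻¹' Iic 0) := by
        ext x
        simp only [hE, mem_setOf_eq, mem_union, mem_inter_iff, mem_preimage, mem_Iic, mem_Ici]
        tauto
      rw [h2]
      exact (hcP.preimage_isClosed_of_isClosed isClosed_Ici isClosed_Iic).union
        (hcQ.preimage_isClosed_of_isClosed isClosed_Ici isClosed_Iic)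
    set σ := sInf E with hσ
    have hσE : σ ∈ E := hcl.csInf_mem hne hbdd
    have hσ0 : t0 ≤ σ := hσE.1
    have ht0notE : t0 ∉ E := by
      intro h
      have h1 : c t0 > 0 := hcpos t0
      rcases h.2 with h2 | h2 <;> linarith
    have hσgt : t0 < σ := lt_of_le_of_ne hσ0 (fun h => ht0notE (h ▸ hσE))
    have hbefore : ∀ t, t0 ≤ t → t < σ → 0 < P t + c t ∧ 0 < Q t + c t := by
      intro t ht htσ
      by_contra hcc
      push_neg at hcc
      have htE : t ∈ E := by
        refine ⟨ht, ?_⟩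
        rcases le_or_gt (P t + c t) 0 with h | h
        · exact Or.inl h
        · exact Or.inr (hcc h)
      exact absurd (csInf_le hbdd htE) (not_le.mpr htσ)
    -- limits from the left give ≥ 0 at σ
    have hlim : ∀ f : ℝ → ℝ, ContinuousAt f σ → (∀ t, t0 ≤ t → t < σ → 0 < f t) → 0 ≤ f σ := by
      intro f hcont hpos
      have htends : Tendsto f (𝓝[<] σ) (𝓝 (f σ)) := hcont.tendsto.mono_left nhdsWithin_le_nhds
      have hev : ∀ᶠ t in 𝓝[<] σ, 0 ≤ f t := by
        filter_upwards [Ioo_mem_nhdsLT_of_mem (⟨hσgt, le_refl σ⟩ : σ ∈ Ioc t0 σ)] with t ht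
        exact (hpos t ht.1.le ht.2).le
      exact ge_of_tendsto htends hev
    have hPσ : 0 ≤ P σ + c σ :=
      hlim _ ((hP σ hσ0).continuousAt.add (hcderiv σ).continuousAt)
        (fun t ht htσ => (hbefore t ht htσ).1)
    have hQσ : 0 ≤ Q σ + c σ :=
      hlim _ ((hQ σ hσ0).continuousAt.add (hcderiv σ).continuousAt)
        (fun t ht htσ => (hbefore t ht htσ).2)
    -- the crossing coordinate has positive derivative at σ: contradiction
    have hkey : ∀ d : ℝ → ℝ, d σ = 0 → (∀ t, t0 ≤ t → t < σ → 0 < d t) →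
        ∀ v : ℝ, 0 < v → HasDerivAt d v σ → False := by
      intro d hdσ hdpos v hv hd
      have hslope : Tendsto (slope d σ) (𝓝[<] σ) (𝓝 v) :=
        (hasDerivAt_iff_tendsto_slope.mp hd).mono_left
          (nhdsWithin_mono σ (fun x hx => ne_of_lt hx))
      have hev1 : ∀ᶠ t in 𝓝[<] σ, 0 < slope d σ t := hslope.eventually (eventually_gt_nhds hv)
      have hev2 : Ioo t0 σ ∈ 𝓝[<] σ := Ioo_mem_nhdsLT_of_mem ⟨hσgt, le_refl σ⟩
      obtain ⟨t, hts, htIoo⟩ := (hev1.and (eventually_of_mem hev2 (fun x hx => hx))).exists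
      have h1 : slope d σ t = (d t - d σ) / (t - σ) := by
        rw [slope_def_field]
      have h2 : t - σ < 0 := by linarith [htIoo.2]
      have h3 : d t - d σ < 0 := by
        by_contra h4
        push_neg at h4
        have : slope d σ t ≤ 0 := by
          rw [h1]
          exact div_nonpos_of_nonneg_of_nonpos h4 h2.le
        linarith
      have h5 : 0 < d t := hdpos t htIoo.1.le htIoo.2
      rw [hdσ] at h3
      linarith
    rcases hσE.2 with hcase | hcase
    · -- P σ + c σ ≤ 0, so P σ = -c σ
      have hPeq : P σ = -c σ := by linarith
      have hQge : -c σ ≤ Q σ := by linarith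
      have hd : HasDerivAt (fun t => P t + c t)
          (a11 σ * P σ + a12 σ * Q σ + 3*L*c σ) σ := (hP σ hσ0).add (hcderiv σ)
      have hv : 0 < a11 σ * P σ + a12 σ * Q σ + 3*L*c σ := by
        obtain ⟨hb11, hb12, _, _⟩ := hb σ hσ0
        obtain ⟨ho12, _⟩ := hoff σ hσ0
        obtain ⟨h11a, h11b⟩ := abs_le.mp hb11
        obtain ⟨_, h12b⟩ := abs_le.mp hb12
        have hcσ := hcpos σ
        have e1 : -(L * c σ) ≤ a11 σ * P σ := by rw [hPeq]; nlinarith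
        have e2 : -(L * c σ) ≤ a12 σ * Q σ := by nlinarith
        nlinarith
      exact hkey _ (by linarith) (fun t ht htσ => (hbefore t ht htσ).1) _ hv hd
    · have hQeq : Q σ = -c σ := by linarith
      have hPge : -c σ ≤ P σ := by linarith
      have hd : HasDerivAt (fun t => Q t + c t)
          (a21 σ * P σ + a22 σ * Q σ + 3*L*c σ) σ := (hQ σ hσ0).add (hcderiv σ)
      have hv : 0 < a21 σ * P σ + a22 σ * Q σ + 3*L*c σ := by
        obtain ⟨_, _, hb21, hb22⟩ := hb σ hσ0
        obtain ⟨_, ho21⟩ := hoff σ hσ0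
        obtain ⟨h22a, h22b⟩ := abs_le.mp hb22
        obtain ⟨_, h21b⟩ := abs_le.mp hb21
        have hcσ := hcpos σ
        have e1 : -(L * c σ) ≤ a22 σ * Q σ := by rw [hQeq]; nlinarith
        have e2 : -(L * c σ) ≤ a21 σ * P σ := by nlinarith
        nlinarith
      exact hkey _ (by linarith) (fun t ht htσ => (hbefore t ht htσ).2) _ hv hd
  -- conclude
  intro t ht
  constructor
  · by_contra hneg
    push_neg at hneg
    set η := (-P t) / (2 * Real.exp (3*L*(t - t0))) with hηdef
    have hη : 0 < η := by
      apply div_pos (by linarith) (by positivity)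
    have h1 := main η hη t ht
    have h2 : η * Real.exp (3*L*(t - t0)) = -P t / 2 := by
      rw [hηdef]
      field_simp
    rw [h2] at h1
    push_neg at h1
    linarith [h1.1]
  · by_contra hneg
    push_neg at hneg
    set η := (-Q t) / (2 * Real.exp (3*L*(t - t0))) with hηdef
    have hη : 0 < η := by
      apply div_pos (by linarith) (by positivity)
    have h1 := main η hη t ht
    have h2 : η * Real.exp (3*L*(t - t0)) = -Q t / 2 := by
      rw [hηdef]
      field_simp
    rw [h2] at h1
    push_neg at h1
    linarith [h1.2]


lemma conv_of_mono {f : ℝ → ℝ} {t1 lo hi : ℝ}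
    (h : MonotoneOn f (Ici t1) ∨ AntitoneOn f (Ici t1))
    (hb : ∀ t, t1 ≤ t → lo ≤ f t ∧ f t ≤ hi) :
    ∃ l, Tendsto f atTop (𝓝 l) := by
  set g : ℝ → ℝ := fun t => f (max t t1) with hg
  have hfg : f =ᶠ[atTop] g := by
    filter_upwards [eventually_ge_atTop t1] with t ht
    simp [hg, max_eq_left ht]
  rcases h with hm | hm
  · have hgm : Monotone g := fun s t hst =>
      hm (mem_Ici.mpr (le_max_right s t1)) (mem_Ici.mpr (le_max_right t t1))
        (max_le_max hst (le_refl t1))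
    have hbdd : BddAbove (range g) := by
      refine ⟨hi, ?_⟩
      rintro x ⟨t, rfl⟩
      exact (hb _ (le_max_right t t1)).2
    exact ⟨_, (tendsto_atTop_ciSup hgm hbdd).congr' hfg.symm⟩
  · have hgm : Antitone g := fun s t hst =>
      hm (mem_Ici.mpr (le_max_right s t1)) (mem_Ici.mpr (le_max_right t t1))
        (max_le_max hst (le_refl t1))
    have hbdd : BddBelow (range g) := by
      refine ⟨lo, ?_⟩
      rintro x ⟨t, rfl⟩
      exact (hb _ (le_max_right t t1)).1
    exact ⟨_, (tendsto_atTop_ciInf hgm hbdd).congr' hfg.symm⟩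

lemma deriv_limit_zero {f v : ℝ → ℝ} {t0 l c : ℝ}
    (hf : ∀ t, t0 ≤ t → HasDerivAt f (v t) t)
    (hfl : Tendsto f atTop (𝓝 l)) (hvl : Tendsto v atTop (𝓝 c)) : c = 0 := by
  have key : ∀ n : ℕ, ∃ ξ ∈ Ioo (t0 + n) (t0 + n + 1), v ξ = f (t0 + n + 1) - f (t0 + n) := by
    intro n
    have hab : t0 + (n:ℝ) < t0 + n + 1 := by linarith
    have hcont : ContinuousOn f (Icc (t0 + n) (t0 + n + 1)) := fun u hu =>
      (hf u (by linarith [hu.1, Nat.cast_nonneg (α := ℝ) n] : t0 ≤ u)).continuousAt.continuousWithinAt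
    have hderiv : ∀ x ∈ Ioo (t0 + (n:ℝ)) (t0 + n + 1), HasDerivAt f (v x) x := fun x hx =>
      hf x (by linarith [hx.1, Nat.cast_nonneg (α := ℝ) n])
    obtain ⟨ξ, hξ, heq⟩ := exists_hasDerivAt_eq_slope f v hab hcont hderiv
    refine ⟨ξ, hξ, ?_⟩
    rw [heq]
    have : t0 + (n:ℝ) + 1 - (t0 + n) = 1 := by ring
    rw [this, div_one]
  choose ξ hξ hveq using key
  have hξtop : Tendsto ξ atTop atTop := by
    apply tendsto_atTop_mono (fun n => (hξ n).1.le)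
    apply tendsto_atTop_add_const_left
    exact tendsto_natCast_atTop_atTop
  have h1 : Tendsto (fun n => v (ξ n)) atTop (𝓝 c) := hvl.comp hξtop
  have h2 : Tendsto (fun n => v (ξ n)) atTop (𝓝 0) := by
    have ha : Tendsto (fun n : ℕ => f (t0 + n + 1)) atTop (𝓝 l) := by
      apply hfl.comp
      apply tendsto_atTop_add_const_right
      apply tendsto_atTop_add_const_left
      exact tendsto_natCast_atTop_atTop
    have hb : Tendsto (fun n : ℕ => f (t0 + n)) atTop (𝓝 l) := by
      apply hfl.comp
      apply tendsto_atTop_add_const_left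
      exact tendsto_natCast_atTop_atTop
    have := ha.sub hb
    rw [sub_self] at this
    exact this.congr (fun n => (hveq n).symm)
  exact tendsto_nhds_unique h1 h2

lemma sign_const {f : ℝ → ℝ} {t0 : ℝ} (hc : ContinuousOn f (Ici t0))
    (hne : ∀ t, t0 ≤ t → f t ≠ 0) :
    (∀ t, t0 ≤ t → 0 < f t) ∨ (∀ t, t0 ≤ t → f t < 0) := by
  rcases (hne t0 (le_refl _)).lt_or_gt with h0 | h0
  · right
    intro t ht
    by_contra hpos
    push_neg at hpos
    have hpos' : 0 < f t := lt_of_le_of_ne hpos (Ne.symm (hne t ht))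
    have hsub : Icc (f t0) (f t) ⊆ f '' Icc t0 t :=
      intermediate_value_Icc ht (hc.mono (Icc_subset_Ici_self))
    obtain ⟨x, hx, hfx⟩ := hsub ⟨h0.le, hpos'.le⟩
    exact hne x hx.1 hfx
  · left
    intro t ht
    by_contra hpos
    push_neg at hpos
    have hpos' : f t < 0 := lt_of_le_of_ne hpos (hne t ht)
    have hsub : Icc (f t) (f t0) ⊆ f '' Icc t0 t :=
      intermediate_value_Icc' ht (hc.mono (Icc_subset_Ici_self))
    obtain ⟨x, hx, hfx⟩ := hsub ⟨hpos'.le, h0.le⟩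
    exact hne x hx.1 hfx


/-- `(S, I)` is a solution of the reduced system on `[0, ∞)`. -/
def IsSol (r m β γ μ cSS cSI cIS cII a : ℝ) (S I : ℝ → ℝ) : Prop :=
  ∀ t : ℝ, 0 ≤ t →
    HasDerivAt S (r * S t + a * r * I t - m * S t
      - (cSS * S t + cSI * I t) * S t - β * S t * I t + γ * I t) t ∧
    HasDerivAt I (-(m * I t) - (cIS * S t + cII * I t) * I t
      + β * S t * I t - γ * I t - μ * I t) t

/-- `(s, i)` is an equilibrium point of the reduced system. -/
def IsEquilibrium (r m β γ μ cSS cSI cIS cII a : ℝ) (s i : ℝ) : Prop :=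
  r * s + a * r * i - m * s - (cSS * s + cSI * i) * s - β * s * i + γ * i = 0 ∧
  -(m * i) - (cIS * s + cII * i) * i + β * s * i - γ * i - μ * i = 0

/-- All parameters are positive and `a ∈ (0, 1)`. -/
def ParamsPos (r m β γ μ cSS cSI cIS cII a : ℝ) : Prop :=
  0 < r ∧ 0 < m ∧ 0 < β ∧ 0 < γ ∧ 0 < μ ∧
    0 < cSS ∧ 0 < cSI ∧ 0 < cIS ∧ 0 < cII ∧ 0 < a ∧ a < 1

lemma quad_aux (α b q0 : ℝ) (hα : 0 < α) (hq0 : 0 < q0) :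
    ∃ x : ℝ, 0 < x ∧ α*x^2 = b*x + q0 ∧ ∀ y, 0 < y → α*y^2 = b*y + q0 → y = x := by
  set D := b^2 + 4*α*q0 with hD
  have hDpos : 0 ≤ D := by nlinarith
  have hsq : Real.sqrt D ^ 2 = D := Real.sq_sqrt hDpos
  have habs : |b| < Real.sqrt D := by
    rw [show |b| = Real.sqrt (b^2) by rw [Real.sqrt_sq_eq_abs]]
    apply Real.sqrt_lt_sqrt (sq_nonneg b)
    nlinarith
  set x := (b + Real.sqrt D)/(2*α) with hx
  have hxpos : 0 < x := by
    apply div_pos _ (by linarith)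
    have := neg_abs_le b
    linarith
  have h2 : 2*α*x = b + Real.sqrt D := by
    rw [hx]; field_simp
  have h2' : 2*α*x - b = Real.sqrt D := by linarith
  have h4 : (2*α*x - b)^2 = D := by rw [h2']; exact hsq
  have h5 : 4*α*(α*x^2 - (b*x + q0)) = 0 := by
    rw [hD] at h4; linear_combination h4
  have hroot : α*x^2 = b*x + q0 := by
    rcases mul_eq_zero.mp h5 with h | h
    · linarith
    · linarith
  refine ⟨x, hxpos, hroot, ?_⟩
  intro y hy hyroot
  by_contra hne
  have hfac : (y - x)*(α*(y+x) - b) = 0 := by linear_combination hyroot - hroot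
  rcases mul_eq_zero.mp hfac with h | h
  · exact hne (by linarith)
  · have h1 : α*(y+x) = b := by linarith
    have h6 : α*x*y + q0 = 0 := by linear_combination y*h1 - hyroot
    nlinarith [mul_pos (mul_pos hα hxpos) hy]

lemma part1 (r m β γ μ cSS cSI cIS cII a : ℝ)
    (hr : 0 < r) (hm : 0 < m) (hβ : 0 < β) (hγ : 0 < γ) (hμ : 0 < μ)
    (hcSS : 0 < cSS) (hcSI : 0 < cSI) (hcIS : 0 < cIS) (hcII : 0 < cII)
    (ha : 0 < a)
    (hrm : m < r) (hβc : cIS < β)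
    (hSA : (m + γ + μ) / (β - cIS) < (r - m) / cSS) :
    ∃ Sp Ip : ℝ, 0 < Sp ∧ 0 < Ip ∧
      IsEquilibrium r m β γ μ cSS cSI cIS cII a Sp Ip ∧
      (∀ s i : ℝ, 0 < s → 0 < i →
        IsEquilibrium r m β γ μ cSS cSI cIS cII a s i → s = Sp ∧ i = Ip) := by
  have he : 0 < β - cIS := by linarith
  set e := β - cIS with hedef
  set M := m + γ + μ with hMdef
  have hM : 0 < M := by rw [hMdef]; linarith
  have hq0pos : 0 < (r-m)*e*M - cSS*M^2 := by
    have := (div_lt_div_iff₀ he hcSS).mp hSA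
    nlinarith
  have hαpos : 0 < cSS*cII^2 + (cSI+β)*e*cII := by positivity
  obtain ⟨Ip, hIp, hroot, huniq⟩ := quad_aux (cSS*cII^2 + (cSI+β)*e*cII)
    ((r-m)*e*cII - 2*cSS*M*cII - (cSI+β)*e*M + (a*r+γ)*e^2)
    ((r-m)*e*M - cSS*M^2) hαpos hq0pos
  set Sp := (M + cII*Ip)/e with hSpdef
  have hSp : 0 < Sp := by
    apply div_pos _ he
    positivity
  have heS : e*Sp = M + cII*Ip := by
    rw [hSpdef]; field_simp
  refine ⟨Sp, Ip, hSp, hIp, ⟨?_, ?_⟩, ?_⟩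
  · -- eq1
    have h1 : e^2 * (r * Sp + a * r * Ip - m * Sp - (cSS * Sp + cSI * Ip) * Sp
        - β * Sp * Ip + γ * Ip) = 0 := by
      linear_combination (-1 : ℝ) * hroot +
        ((r-m)*e - cSS*(e*Sp + (M + cII*Ip)) - (cSI+β)*e*Ip) * heS
    have he2 : e^2 ≠ 0 := pow_ne_zero 2 he.ne'
    rcases mul_eq_zero.mp h1 with h | h
    · exact absurd h he2
    · exact h
  · -- eq2
    linear_combination Ip * heS
  · rintro s i hs hi ⟨heq1, heq2⟩
    have hfac : i * (e*s - (M + cII*i)) = 0 := by linear_combination heq2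
    have hes : e*s = M + cII*i := by
      rcases mul_eq_zero.mp hfac with h | h
      · exact absurd h hi.ne'
      · linarith
    have hiroot : (cSS*cII^2 + (cSI+β)*e*cII) * i^2 =
        ((r-m)*e*cII - 2*cSS*M*cII - (cSI+β)*e*M + (a*r+γ)*e^2) * i
          + ((r-m)*e*M - cSS*M^2) := by
      linear_combination (-(e^2)) * heq1 +
        ((r-m)*e - cSS*(e*s + (M + cII*i)) - (cSI+β)*e*i) * hes
    have hieq : i = Ip := huniq i hi hiroot
    refine ⟨?_, hieq⟩
    have : e*s = e*Sp := by rw [hes, heS, hieq]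
    exact mul_left_cancel₀ he.ne' this

lemma part2 (r m β γ μ cSS cSI cIS cII a : ℝ)
    (hr : 0 < r) (hm : 0 < m) (hβ : 0 < β) (hγ : 0 < γ) (hμ : 0 < μ)
    (hcSS : 0 < cSS) (hcSI : 0 < cSI) (hcIS : 0 < cIS) (hcII : 0 < cII)
    (ha : 0 < a) (ha1 : a < 1)
    (hrm : m < r) (hβc : cIS < β)
    (hSA : (m + γ + μ) / (β - cIS) < (r - m) / cSS)
    (hSB : (r - m) / cSS < (a * r + γ) / (cSI + β))
    (S I : ℝ → ℝ) (hsol : IsSol r m β γ μ cSS cSI cIS cII a S I)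
    (hS0 : 0 < S 0) (hI0 : 0 < I 0) :
    ∃ s i : ℝ, 0 < s ∧ 0 < i ∧ IsEquilibrium r m β γ μ cSS cSI cIS cII a s i ∧
      Tendsto (fun t => (S t, I t)) atTop (𝓝 ((s, i) : ℝ × ℝ)) := by
  set P : ℝ → ℝ := fun t => r * S t + a * r * I t - m * S t
      - (cSS * S t + cSI * I t) * S t - β * S t * I t + γ * I t with hPdef
  set Q : ℝ → ℝ := fun t => -(m * I t) - (cIS * S t + cII * I t) * I t
      + β * S t * I t - γ * I t - μ * I t with hQdef
  have hS : ∀ t, 0 ≤ t → HasDerivAt S (P t) t := fun t ht => (hsol t ht).1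
  have hI : ∀ t, 0 ≤ t → HasDerivAt I (Q t) t := fun t ht => (hsol t ht).2
  -- continuity of truncated coordinates
  have hmaxc : Continuous (fun u : ℝ => max u 0) := continuous_id.max continuous_const
  have hCS : Continuous (fun t => S (max t 0)) := by
    rw [continuous_iff_continuousAt]
    intro t
    have h1 : ContinuousAt (S ∘ (fun u : ℝ => max u 0)) t :=
      ContinuousAt.comp ((hS _ (le_max_right t 0)).continuousAt) hmaxc.continuousAt
    exact h1
  have hCI : Continuous (fun t => I (max t 0)) := by
    rw [continuous_iff_continuousAt]
    intro t
    have h1 : ContinuousAt (I ∘ (fun u : ℝ => max u 0)) t :=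
      ContinuousAt.comp ((hI _ (le_max_right t 0)).continuousAt) hmaxc.continuousAt
    exact h1
  -- positivity of I
  have hIpos : ∀ t, 0 ≤ t → 0 < I t := by
    set g : ℝ → ℝ := fun t => -m - (cIS * S (max t 0) + cII * I (max t 0))
        + β * S (max t 0) - γ - μ with hgdef
    have hg : Continuous g := by
      apply Continuous.sub
      apply Continuous.sub
      apply Continuous.add
      apply Continuous.sub
      · exact continuous_const
      · exact (continuous_const.mul hCS).add (continuous_const.mul hCI)
      · exact continuous_const.mul hCS
      · exact continuous_const
      · exact continuous_const
    have hI' : ∀ t, 0 ≤ t → HasDerivAt I (g t * I t) t := by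
      intro t ht
      have h1 := hI t ht
      have h2 : g t * I t = Q t := by
        rw [hgdef, hQdef]
        simp only [max_eq_left ht]
        ring
      rw [h2]
      exact h1
    intro t ht
    rw [exp_rep hg hI' t ht]
    positivity
  -- positivity of S
  have hSpos : ∀ t, 0 ≤ t → 0 < S t := by
    set g : ℝ → ℝ := fun t => r - m - (cSS * S (max t 0) + cSI * I (max t 0))
        - β * I (max t 0) with hgdef
    have hg : Continuous g := by
      apply Continuous.sub
      apply Continuous.sub
      · exact continuous_const
      · exact (continuous_const.mul hCS).add (continuous_const.mul hCI)
      · exact continuous_const.mul hCI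
    set G : ℝ → ℝ := fun u => ∫ s in (0:ℝ)..u, g s with hGdef
    have hG' : ∀ u : ℝ, HasDerivAt G (g u) u := fun u =>
      (hg.integral_hasStrictDerivAt 0 u).hasDerivAt
    have hh : ∀ t, 0 ≤ t → HasDerivAt (fun s => S s * Real.exp (-G s))
        ((a*r*I t + γ*I t) * Real.exp (-G t)) t := by
      intro t ht
      have h1 : HasDerivAt (fun s => S s * Real.exp (-G s))
          (P t * Real.exp (-G t) + S t * (Real.exp (-G t) * -g t)) t :=
        (hS t ht).mul ((hG' t).neg.exp)
      convert h1 using 1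
      rw [hPdef, hgdef]
      simp only [max_eq_left ht]
      ring
    have hmono : MonotoneOn (fun s => S s * Real.exp (-G s)) (Ici 0) := by
      apply monoOn_of_deriv hh
      intro t ht
      have := hIpos t ht
      positivity
    intro t ht
    have h2 : S 0 * Real.exp (-G 0) ≤ S t * Real.exp (-G t) :=
      hmono (mem_Ici.mpr (le_refl 0)) (mem_Ici.mpr ht) ht
    have h3 : 0 < S t * Real.exp (-G t) := by
      have h4 : 0 < S 0 * Real.exp (-G 0) := by positivity
      linarith
    have h5 : 0 < Real.exp (-G t) := Real.exp_pos _
    nlinarith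
  -- global bound on S + I
  set cmin := min (min cSS cSI) (min cIS cII) with hcmindef
  have hcmin : 0 < cmin := by
    rw [hcmindef]
    exact lt_min (lt_min hcSS hcSI) (lt_min hcIS hcII)
  have hc1 : cmin ≤ cSS := le_trans (min_le_left _ _) (min_le_left _ _)
  have hc2 : cmin ≤ cSI := le_trans (min_le_left _ _) (min_le_right _ _)
  have hc3 : cmin ≤ cIS := le_trans (min_le_right _ _) (min_le_left _ _)
  have hc4 : cmin ≤ cII := le_trans (min_le_right _ _) (min_le_right _ _)
  set M0 := max (S 0 + I 0) ((r - m)/cmin) with hM0def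
  have hM0pos : 0 < M0 := lt_of_lt_of_le (by linarith) (le_max_left _ _)
  have hNbound : ∀ t, 0 ≤ t → S t + I t ≤ M0 := by
    apply stay_le (v := fun t => P t + Q t)
      (fun t ht => (hS t ht).add (hI t ht))
      _ (le_max_left _ _)
    intro t ht hge
    have hSt := hSpos t ht
    have hIt := hIpos t ht
    have h1 : (r - m)/cmin ≤ S t + I t := le_trans (le_max_right _ _) hge
    have h2 : r - m ≤ cmin * (S t + I t) := by
      rw [div_le_iff₀ hcmin] at h1
      linarith [h1]
    simp only [hPdef, hQdef]
    have key : (cSS * S t + cSI * I t) * S t + (cIS * S t + cII * I t) * I t ≥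
        cmin * (S t + I t) * (S t + I t) := by
      nlinarith [mul_pos hSt hIt, sq_nonneg (S t), sq_nonneg (I t),
        mul_nonneg (sub_nonneg.mpr hc1) (sq_nonneg (S t)),
        mul_nonneg (sub_nonneg.mpr hc4) (sq_nonneg (I t)),
        mul_nonneg (mul_nonneg (sub_nonneg.mpr hc2) hSt.le) hIt.le,
        mul_nonneg (mul_nonneg (sub_nonneg.mpr hc3) hSt.le) hIt.le]
    have h3 := mul_le_mul_of_nonneg_right h2 (by linarith : (0:ℝ) ≤ S t + I t)
    have e1 : a*r ≤ r := by nlinarith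
    have harI : a*r*I t ≤ r*I t := mul_le_mul_of_nonneg_right e1 hIt.le
    have hμI : 0 ≤ μ * I t := mul_nonneg hμ.le hIt.le
    linarith [key, h3, harI, hμI]
  -- trapping region S ≤ Bv
  set S1 : ℝ := (r - m)/cSS with hS1def
  set Bv : ℝ := (a*r + γ)/(cSI + β) with hBvdef
  have hS1pos : 0 < S1 := div_pos (by linarith) hcSS
  have hBvpos : 0 < Bv := div_pos (by positivity) (by positivity)
  have hcSSS1 : cSS * S1 = r - m := by rw [hS1def]; field_simp
  have hBv : (cSI + β) * Bv = a*r + γ := by rw [hBvdef]; field_simp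
  have hS1B : S1 < Bv := hSB
  set δ : ℝ := cSS * Bv * (Bv - S1) with hδdef
  have hδpos : 0 < δ := by
    rw [hδdef]; apply mul_pos (mul_pos hcSS hBvpos); linarith
  have hFSle : ∀ t, 0 ≤ t → Bv ≤ S t → P t ≤ cSS * S t * (S1 - S t) := by
    intro t ht hBS
    have hIt := hIpos t ht
    have h1 : P t = cSS * S t * (S1 - S t) + I t * ((a*r + γ) - (cSI + β) * S t) := by
      simp only [hPdef]
      linear_combination (-(S t)) * hcSSS1
    have h2 : (a*r + γ) - (cSI + β) * S t ≤ 0 := by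
      nlinarith [mul_le_mul_of_nonneg_left hBS (by positivity : (0:ℝ) ≤ cSI + β)]
    have h3 : I t * ((a*r + γ) - (cSI + β) * S t) ≤ 0 :=
      mul_nonpos_of_nonneg_of_nonpos hIt.le h2
    linarith
  have hφ : ∀ t, 0 ≤ t → Bv ≤ S t → cSS * S t * (S1 - S t) ≤ -δ := by
    intro t ht hBS
    rw [hδdef]
    nlinarith [mul_nonneg (mul_nonneg hcSS.le (sub_nonneg.mpr hBS))
      (by linarith : (0:ℝ) ≤ S t + Bv - S1)]
  have hentry : ∃ T0, 0 ≤ T0 ∧ S T0 ≤ Bv := by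
    by_contra hno
    push_neg at hno
    set t1 : ℝ := S 0 / δ with ht1def
    have ht1pos : 0 ≤ t1 := (div_pos hS0 hδpos).le
    have hanti : AntitoneOn (fun t => S t + δ * t) (Ici 0) := by
      apply antiOn_of_deriv (v := fun t => P t + δ)
      · intro t ht
        have h1 : HasDerivAt (fun t => S t + δ * t) (P t + δ * 1) t :=
          (hS t ht).add ((hasDerivAt_id t).const_mul δ)
        simpa using h1
      · intro t ht
        have e1 := hFSle t ht (hno t ht).le
        have e2 := hφ t ht (hno t ht).le
        linarith
    have h2 : S t1 + δ * t1 ≤ S 0 + δ * 0 :=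
      hanti (mem_Ici.mpr le_rfl) (mem_Ici.mpr ht1pos) ht1pos
    have h3 : δ * t1 = S 0 := by
      rw [ht1def]; field_simp
    have := hSpos t1 ht1pos
    linarith
  obtain ⟨T0, hT0, hST0⟩ := hentry
  have hSBv : ∀ t, T0 ≤ t → S t ≤ Bv := by
    apply stay_le (v := P) (fun t ht => hS t (le_trans hT0 ht)) _ hST0
    intro t ht hge
    have ht0 : 0 ≤ t := le_trans hT0 ht
    linarith [hFSle t ht0 hge, hφ t ht0 hge, hδpos]
  -- variational (Metzler) system
  set a11 : ℝ → ℝ := fun t => r - m - 2*cSS*S t - cSI*I t - β*I t with ha11def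
  set a12 : ℝ → ℝ := fun t => (a*r + γ) - (cSI + β)*S t with ha12def
  set a21 : ℝ → ℝ := fun t => (β - cIS)*I t with ha21def
  set a22 : ℝ → ℝ := fun t => -m - cIS*S t - 2*cII*I t + β*S t - γ - μ with ha22def
  have hPd : ∀ t, 0 ≤ t → HasDerivAt P (a11 t * P t + a12 t * Q t) t := by
    intro t ht
    have hds := hS t ht
    have hdi := hI t ht
    have h1 := (((((hds.const_mul r).add (hdi.const_mul (a*r))).sub (hds.const_mul m)).sub
      (((hds.const_mul cSS).add (hdi.const_mul cSI)).mul hds)).sub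
      ((hds.const_mul β).mul hdi)).add (hdi.const_mul γ)
    have h2 : HasDerivAt P (r * P t + a*r * Q t - m * P t
        - ((cSS * P t + cSI * Q t) * S t + (cSS * S t + cSI * I t) * P t)
        - ((β * P t) * I t + (β * S t) * Q t) + γ * Q t) t := h1
    convert h2 using 1
    simp only [hPdef, hQdef, ha11def, ha12def]
    ring
  have hQd : ∀ t, 0 ≤ t → HasDerivAt Q (a21 t * P t + a22 t * Q t) t := by
    intro t ht
    have hds := hS t ht
    have hdi := hI t ht
    have h1 := (((((hdi.const_mul m).neg).sub
      (((hds.const_mul cIS).add (hdi.const_mul cII)).mul hdi)).add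
      ((hds.const_mul β).mul hdi)).sub (hdi.const_mul γ)).sub (hdi.const_mul μ)
    have h2 : HasDerivAt Q (-(m * Q t)
        - ((cIS * P t + cII * Q t) * I t + (cIS * S t + cII * I t) * Q t)
        + ((β * P t) * I t + (β * S t) * Q t) - γ * Q t - μ * Q t) t := h1
    convert h2 using 1
    simp only [hPdef, hQdef, ha21def, ha22def]
    ring
  -- bounds on the variational coefficients
  set L : ℝ := 1 + r + m + γ + μ + a*r + 2*(cSS*Bv) + cSI*M0 + β*M0 + β*Bv + cIS*Bv
      + 2*(cII*M0) + cIS*M0 + cSI*Bv with hLdef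
  have hLpos : 0 < L := by
    rw [hLdef]
    linarith [mul_pos hcSS hBvpos, mul_pos hcSI hM0pos, mul_pos hβ hM0pos,
      mul_pos hβ hBvpos, mul_pos hcIS hBvpos, mul_pos hcII hM0pos,
      mul_pos hcIS hM0pos, mul_pos hcSI hBvpos, mul_pos ha hr]
  have hbase : ∀ t, T0 ≤ t → 0 < S t ∧ S t ≤ Bv ∧ 0 < I t ∧ I t ≤ M0 := by
    intro t ht
    have ht0 : 0 ≤ t := le_trans hT0 ht
    have hSt := hSpos t ht0
    have hIt := hIpos t ht0
    exact ⟨hSt, hSBv t ht, hIt, by linarith [hNbound t ht0]⟩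
  have hbounds : ∀ t, T0 ≤ t → |a11 t| ≤ L ∧ |a12 t| ≤ L ∧ |a21 t| ≤ L ∧ |a22 t| ≤ L := by
    intro t ht
    obtain ⟨hSt, hSle, hIt, hIle⟩ := hbase t ht
    have pb1 : cSS*S t ≤ cSS*Bv := mul_le_mul_of_nonneg_left hSle hcSS.le
    have pb2 : cSI*I t ≤ cSI*M0 := mul_le_mul_of_nonneg_left hIle hcSI.le
    have pb3 : β*I t ≤ β*M0 := mul_le_mul_of_nonneg_left hIle hβ.le
    have pb4 : β*S t ≤ β*Bv := mul_le_mul_of_nonneg_left hSle hβ.le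
    have pb5 : cIS*S t ≤ cIS*Bv := mul_le_mul_of_nonneg_left hSle hcIS.le
    have pb6 : cII*I t ≤ cII*M0 := mul_le_mul_of_nonneg_left hIle hcII.le
    have pb7 : cIS*I t ≤ cIS*M0 := mul_le_mul_of_nonneg_left hIle hcIS.le
    have pb8 : cSI*S t ≤ cSI*Bv := mul_le_mul_of_nonneg_left hSle hcSI.le
    have nn1 : 0 ≤ cSS*S t := (mul_pos hcSS hSt).le
    have nn2 : 0 ≤ cSI*I t := (mul_pos hcSI hIt).le
    have nn3 : 0 ≤ β*I t := (mul_pos hβ hIt).le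
    have nn4 : 0 ≤ β*S t := (mul_pos hβ hSt).le
    have nn5 : 0 ≤ cIS*S t := (mul_pos hcIS hSt).le
    have nn6 : 0 ≤ cII*I t := (mul_pos hcII hIt).le
    have nn7 : 0 ≤ cIS*I t := (mul_pos hcIS hIt).le
    have nn8 : 0 ≤ cSI*S t := (mul_pos hcSI hSt).le
    have hm1 : 0 < M0 := hM0pos
    have hb1 : 0 < Bv := hBvpos
    have har : 0 < a*r := mul_pos ha hr
    have har' : 0 < a*r := mul_pos ha hr
    refine ⟨?_, ?_, ?_, ?_⟩
    · rw [abs_le]; constructor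
      · simp only [ha11def, hLdef]; linarith
      · simp only [ha11def, hLdef]; linarith
    · rw [abs_le]; constructor
      · simp only [ha12def, hLdef]; linarith
      · simp only [ha12def, hLdef]; linarith
    · rw [abs_le]; constructor
      · simp only [ha21def, hLdef]; linarith
      · simp only [ha21def, hLdef]; linarith
    · rw [abs_le]; constructor
      · simp only [ha22def, hLdef]; linarith
      · simp only [ha22def, hLdef]; linarith
  have hoff : ∀ t, T0 ≤ t → 0 ≤ a12 t ∧ 0 ≤ a21 t := by
    intro t ht
    obtain ⟨hSt, hSle, hIt, _⟩ := hbase t ht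
    constructor
    · simp only [ha12def]
      nlinarith [mul_le_mul_of_nonneg_left hSle (by positivity : (0:ℝ) ≤ cSI + β), hBv]
    · simp only [ha21def]
      nlinarith
  -- eventual monotonicity of both coordinates
  have hmonos : ∃ t1, T0 ≤ t1 ∧ (MonotoneOn S (Ici t1) ∨ AntitoneOn S (Ici t1))
      ∧ (MonotoneOn I (Ici t1) ∨ AntitoneOn I (Ici t1)) := by
    by_cases hcase : ∃ t1, T0 ≤ t1 ∧ ((0 ≤ P t1 ∧ 0 ≤ Q t1) ∨ (P t1 ≤ 0 ∧ Q t1 ≤ 0))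
    · obtain ⟨t1, ht1, hor⟩ := hcase
      have hd1 : ∀ t, t1 ≤ t → 0 ≤ t := fun t ht => le_trans (le_trans hT0 ht1) ht
      have hd2 : ∀ t, t1 ≤ t → T0 ≤ t := fun t ht => le_trans ht1 ht
      rcases hor with ⟨hp0, hq0⟩ | ⟨hp0, hq0⟩
      · have hsign := metzler hLpos (fun t ht => hPd t (hd1 t ht))
          (fun t ht => hQd t (hd1 t ht)) (fun t ht => hbounds t (hd2 t ht))
          (fun t ht => hoff t (hd2 t ht)) hp0 hq0
        exact ⟨t1, ht1,
          Or.inl (monoOn_of_deriv (fun t ht => hS t (hd1 t ht)) (fun t ht => (hsign t ht).1)),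
          Or.inl (monoOn_of_deriv (fun t ht => hI t (hd1 t ht)) (fun t ht => (hsign t ht).2))⟩
      · have hPd' : ∀ t, t1 ≤ t →
            HasDerivAt (fun u => -P u) (a11 t * (-P t) + a12 t * (-Q t)) t := by
          intro t ht
          have h1 : HasDerivAt (fun u => -P u) (-(a11 t * P t + a12 t * Q t)) t :=
            (hPd t (hd1 t ht)).neg
          convert h1 using 1; ring
        have hQd' : ∀ t, t1 ≤ t →
            HasDerivAt (fun u => -Q u) (a21 t * (-P t) + a22 t * (-Q t)) t := by
          intro t ht
          have h1 : HasDerivAt (fun u => -Q u) (-(a21 t * P t + a22 t * Q t)) t :=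
            (hQd t (hd1 t ht)).neg
          convert h1 using 1; ring
        have hsign := metzler hLpos hPd' hQd' (fun t ht => hbounds t (hd2 t ht))
          (fun t ht => hoff t (hd2 t ht)) (by simpa using neg_nonneg.mpr hp0)
          (by simpa using neg_nonneg.mpr hq0)
        refine ⟨t1, ht1,
          Or.inr (antiOn_of_deriv (fun t ht => hS t (hd1 t ht)) (fun t ht => ?_)),
          Or.inr (antiOn_of_deriv (fun t ht => hI t (hd1 t ht)) (fun t ht => ?_))⟩
        · have := (hsign t ht).1; linarith
        · have := (hsign t ht).2; linarith
    · have hne : ∀ t, T0 ≤ t → P t ≠ 0 ∧ Q t ≠ 0 := by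
        intro t ht
        constructor
        · intro h0
          rcases le_or_gt 0 (Q t) with hq | hq
          · exact hcase ⟨t, ht, Or.inl ⟨h0.ge, hq⟩⟩
          · exact hcase ⟨t, ht, Or.inr ⟨h0.le, hq.le⟩⟩
        · intro h0
          rcases le_or_gt 0 (P t) with hp | hp
          · exact hcase ⟨t, ht, Or.inl ⟨hp, h0.ge⟩⟩
          · exact hcase ⟨t, ht, Or.inr ⟨hp.le, h0.le⟩⟩
      have hPcont : ContinuousOn P (Ici T0) := fun u hu =>
        (hPd u (le_trans hT0 hu)).continuousAt.continuousWithinAt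
      have hQcont : ContinuousOn Q (Ici T0) := fun u hu =>
        (hQd u (le_trans hT0 hu)).continuousAt.continuousWithinAt
      refine ⟨T0, le_refl _, ?_, ?_⟩
      · rcases sign_const hPcont (fun t ht => (hne t ht).1) with h | h
        · exact Or.inl (monoOn_of_deriv (fun t ht => hS t (le_trans hT0 ht))
            (fun t ht => (h t ht).le))
        · exact Or.inr (antiOn_of_deriv (fun t ht => hS t (le_trans hT0 ht))
            (fun t ht => (h t ht).le))
      · rcases sign_const hQcont (fun t ht => (hne t ht).2) with h | h
        · exact Or.inl (monoOn_of_deriv (fun t ht => hI t (le_trans hT0 ht))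
            (fun t ht => (h t ht).le))
        · exact Or.inr (antiOn_of_deriv (fun t ht => hI t (le_trans hT0 ht))
            (fun t ht => (h t ht).le))
  obtain ⟨t1, ht1T0, hSm, hIm⟩ := hmonos
  have ht10 : 0 ≤ t1 := le_trans hT0 ht1T0
  obtain ⟨sstar, hslim⟩ := conv_of_mono (lo := 0) (hi := M0) hSm (fun t ht => by
    have ht0 : 0 ≤ t := le_trans ht10 ht
    constructor
    · exact (hSpos t ht0).le
    · linarith [hNbound t ht0, hIpos t ht0])
  obtain ⟨istar, hilim⟩ := conv_of_mono (lo := 0) (hi := M0) hIm (fun t ht => by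
    have ht0 : 0 ≤ t := le_trans ht10 ht
    constructor
    · exact (hIpos t ht0).le
    · linarith [hNbound t ht0, hSpos t ht0])
  -- the limit is an equilibrium
  have hPlim : Tendsto P atTop (𝓝 (r*sstar + a*r*istar - m*sstar
      - (cSS*sstar + cSI*istar)*sstar - β*sstar*istar + γ*istar)) := by
    rw [hPdef]
    exact (((((hslim.const_mul r).add (hilim.const_mul (a*r))).sub (hslim.const_mul m)).sub
      (((hslim.const_mul cSS).add (hilim.const_mul cSI)).mul hslim)).sub
      ((hslim.const_mul β).mul hilim)).add (hilim.const_mul γ)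
  have hQlim : Tendsto Q atTop (𝓝 (-(m*istar) - (cIS*sstar + cII*istar)*istar
      + β*sstar*istar - γ*istar - μ*istar)) := by
    rw [hQdef]
    exact (((((hilim.const_mul m).neg).sub
      (((hslim.const_mul cIS).add (hilim.const_mul cII)).mul hilim)).add
      ((hslim.const_mul β).mul hilim)).sub (hilim.const_mul γ)).sub (hilim.const_mul μ)
  have heq1 : r*sstar + a*r*istar - m*sstar - (cSS*sstar + cSI*istar)*sstar
      - β*sstar*istar + γ*istar = 0 := deriv_limit_zero hS hslim hPlim
  have heq2 : -(m*istar) - (cIS*sstar + cII*istar)*istar + β*sstar*istar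
      - γ*istar - μ*istar = 0 := deriv_limit_zero hI hilim hQlim
  -- limits are nonnegative
  have hsstar0 : 0 ≤ sstar := ge_of_tendsto hslim (by
    filter_upwards [eventually_ge_atTop (0:ℝ)] with t ht
    exact (hSpos t ht).le)
  have histar0 : 0 ≤ istar := ge_of_tendsto hilim (by
    filter_upwards [eventually_ge_atTop (0:ℝ)] with t ht
    exact (hIpos t ht).le)
  -- exclude boundary equilibria
  have histar : 0 < istar := by
    rcases histar0.lt_or_eq with h | h
    · exact h
    exfalso
    have hi0 : istar = 0 := h.symm
    rw [hi0] at heq1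
    have hfs : sstar * ((r - m) - cSS*sstar) = 0 := by linear_combination heq1
    rcases mul_eq_zero.mp hfs with hs0 | hs1
    · -- sstar = 0 : repelled from the origin
      have hε : (0:ℝ) < (r - m)/(2*(cSS + cSI + β)) := div_pos (by linarith) (by positivity)
      set ε := (r - m)/(2*(cSS + cSI + β)) with hεdef
      have hεe : (cSS + cSI + β)*ε = (r - m)/2 := by
        rw [hεdef]; field_simp
      have hev : ∀ᶠ t in atTop, S t < ε ∧ I t < ε ∧ (0:ℝ) ≤ t := by
        have e1 := (tendsto_order.mp hslim).2 ε (by rw [hs0]; exact hε)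
        have e2 := (tendsto_order.mp hilim).2 ε (by rw [hi0]; exact hε)
        filter_upwards [e1, e2, eventually_ge_atTop (0:ℝ)] with t u1 u2 u3 using ⟨u1, u2, u3⟩
      obtain ⟨T, hT⟩ := eventually_atTop.mp hev
      set T' := max T 0 with hT'def
      have hT'0 : (0:ℝ) ≤ T' := le_max_right _ _
      have hmono : MonotoneOn S (Ici T') := by
        apply monoOn_of_deriv (v := P) (fun t ht => hS t (le_trans hT'0 ht))
        intro t ht
        obtain ⟨e1, e2, e3⟩ := hT t (le_trans (le_max_left _ _) ht)
        have hSt := hSpos t e3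
        have hIt := hIpos t e3
        have hbr : 0 ≤ r - m - cSS*S t - cSI*I t - β*I t := by
          have q1 : cSS*S t ≤ cSS*ε := mul_le_mul_of_nonneg_left e1.le hcSS.le
          have q2 : cSI*I t ≤ cSI*ε := mul_le_mul_of_nonneg_left e2.le hcSI.le
          have q3 : β*I t ≤ β*ε := mul_le_mul_of_nonneg_left e2.le hβ.le
          linarith
        simp only [hPdef]
        linarith [mul_nonneg hSt.le hbr, mul_pos (mul_pos ha hr) hIt, mul_pos hγ hIt]
      have hfin : S T' ≤ sstar := ge_of_tendsto hslim (by
        filter_upwards [eventually_ge_atTop T'] with t ht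
        exact hmono (mem_Ici.mpr le_rfl) (mem_Ici.mpr ht) ht)
      have := hSpos T' hT'0
      rw [hs0] at hfin
      linarith
    · -- sstar = S1 : infection can invade
      set g2 : ℝ → ℝ := fun t => -m - cIS*S t - cII*I t + β*S t - γ - μ with hg2def
      have hg2lim : Tendsto g2 atTop (𝓝 (-m - cIS*sstar - cII*istar + β*sstar - γ - μ)) := by
        rw [hg2def]
        exact ((((tendsto_const_nhds.sub (hslim.const_mul cIS)).sub
          (hilim.const_mul cII)).add (hslim.const_mul β)).sub tendsto_const_nhds).sub
          tendsto_const_nhds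
      have hlpos : 0 < -m - cIS*sstar - cII*istar + β*sstar - γ - μ := by
        rw [hi0]
        have h6 := (div_lt_div_iff₀ (by linarith : (0:ℝ) < β - cIS) hcSS).mp hSA
        have hrm' : r - m = cSS*sstar := by linarith
        rw [hrm'] at h6
        have h9 : (m + γ + μ)*cSS < (sstar*(β - cIS))*cSS := by linarith [h6]
        have h10 : m + γ + μ < sstar*(β - cIS) := lt_of_mul_lt_mul_right h9 hcSS.le
        linarith [h10]
      have hev := (tendsto_order.mp hg2lim).1 0 hlpos
      obtain ⟨T, hT⟩ := eventually_atTop.mp (hev.and (eventually_ge_atTop (0:ℝ)))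
      set T' := max T 0 with hT'def
      have hT'0 : (0:ℝ) ≤ T' := le_max_right _ _
      have hmono : MonotoneOn I (Ici T') := by
        apply monoOn_of_deriv (v := Q) (fun t ht => hI t (le_trans hT'0 ht))
        intro t ht
        obtain ⟨e1, e2⟩ := hT t (le_trans (le_max_left _ _) ht)
        have hIt := hIpos t e2
        have hgt : Q t = I t * g2 t := by
          simp only [hQdef, hg2def]; ring
        rw [hgt]
        exact mul_nonneg hIt.le e1.le
      have hfin : I T' ≤ istar := ge_of_tendsto hilim (by
        filter_upwards [eventually_ge_atTop T'] with t ht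
        exact hmono (mem_Ici.mpr le_rfl) (mem_Ici.mpr ht) ht)
      have := hIpos T' hT'0
      rw [hi0] at hfin
      linarith
  have hsstar : 0 < sstar := by
    rcases hsstar0.lt_or_eq with h | h
    · exact h
    exfalso
    have hs0 : sstar = 0 := h.symm
    rw [hs0] at heq1
    have hfact : (a*r + γ)*istar = 0 := by linear_combination heq1
    rcases mul_eq_zero.mp hfact with h2 | h2
    · nlinarith
    · linarith
  exact ⟨sstar, istar, hsstar, histar, ⟨heq1, heq2⟩, hslim.prodMk_nhds hilim⟩


/-- Proposition 5 (global attraction): if `A < S1 < B` the unique interior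
equilibrium attracts every positive solution. -/
theorem prop5_global_attraction
    (r m β γ μ cSS cSI cIS cII a : ℝ)
    (hp : ParamsPos r m β γ μ cSS cSI cIS cII a)
    (hrm : m < r) (hβc : cIS < β)
    (hSA : (m + γ + μ) / (β - cIS) < (r - m) / cSS)
    (hSB : (r - m) / cSS < (a * r + γ) / (cSI + β)) :
    ∃ Sp Ip : ℝ, 0 < Sp ∧ 0 < Ip ∧
      IsEquilibrium r m β γ μ cSS cSI cIS cII a Sp Ip ∧
      (∀ s i : ℝ, 0 < s → 0 < i →
        IsEquilibrium r m β γ μ cSS cSI cIS cII a s i → s = Sp ∧ i = Ip) ∧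
      (∀ S I : ℝ → ℝ, IsSol r m β γ μ cSS cSI cIS cII a S I →
        0 < S 0 → 0 < I 0 →
        Tendsto (fun t => (S t, I t)) atTop (𝓝 ((Sp, Ip) : ℝ × ℝ))) := by
  obtain ⟨hr, hm, hβ, hγ, hμ, hcSS, hcSI, hcIS, hcII, ha, ha1⟩ := hp
  obtain ⟨Sp, Ip, hSp, hIp, heq, huniq⟩ := part1 r m β γ μ cSS cSI cIS cII a
    hr hm hβ hγ hμ hcSS hcSI hcIS hcII ha hrm hβc hSA
  refine ⟨Sp, Ip, hSp, hIp, heq, huniq, ?_⟩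
  intro S I hsol hS0 hI0
  obtain ⟨s, i, hs, hi, heqm, htend⟩ := part2 r m β γ μ cSS cSI cIS cII a
    hr hm hβ hγ hμ hcSS hcSI hcIS hcII ha ha1 hrm hβc hSA hSB S I hsol hS0 hI0
  obtain ⟨h1, h2⟩ := huniq s i hs hi heqm
  rw [← h1, ← h2]
  exact htend
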